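/- Let T be a TBox in L_Φ and let I, I' be unreachable-objects-free interpretations (every domain element is reachable from some named individual a^I by a finite path of edges of basic roles) such that there exists an L_Φ-bisimulation between I and I'. Then I is a model of T if and only if I' is a model of T. -/
import Mathlib


/-- A set of DL-features (subset of {I, O, Q, U, Self}). -/
structure DLFeat where
  hasI : Bool
  hasO : Bool
  hasQ : Bool
  hasU : Bool
  hasSelf : Bool

/-- An interpretation with concept names `CN`, role names `RN`, individual names `IN`
and domain `D`. -/
structure Interp (CN RN IN : Type) (D : Type) where
  cInt : CN → Set D
  rInt : RN → D → D → Prop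
  iInt : IN → D

/-- Interpretation of a basic role: a role name, possibly inverted. -/
def brInt {CN RN IN D : Type} (I : Interp CN RN IN D) (R : RN × Bool) (x y : D) : Prop :=
  if R.2 then I.rInt R.1 y x else I.rInt R.1 x y

mutual
/-- Concepts of the full language (membership in `L_Φ` is a separate predicate). -/
inductive DLConcept (CN RN IN : Type) : Type where
  | atom (A : CN)
  | top
  | bot
  | neg (C : DLConcept CN RN IN)
  | conj (C D : DLConcept CN RN IN)
  | disj (C D : DLConcept CN RN IN)
  | all (R : DLRole CN RN IN) (C : DLConcept CN RN IN)
  | ex (R : DLRole CN RN IN) (C : DLConcept CN RN IN)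
  | nom (a : IN)
  | atLeast (n : ℕ) (r : RN) (inverted : Bool) (C : DLConcept CN RN IN)
  | atMost (n : ℕ) (r : RN) (inverted : Bool) (C : DLConcept CN RN IN)
  | exSelf (r : RN)
/-- Roles of the full language. -/
inductive DLRole (CN RN IN : Type) : Type where
  | name (r : RN)
  | eps
  | comp (R S : DLRole CN RN IN)
  | runion (R S : DLRole CN RN IN)
  | star (R : DLRole CN RN IN)
  | test (C : DLConcept CN RN IN)
  | inv (r : RN)
  | univ
end

mutual
/-- The concept belongs to the language `L_Φ`. -/
def DLConcept.inL {CN RN IN : Type} (Φ : DLFeat) : DLConcept CN RN IN → Prop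
  | .atom _ => True
  | .top => True
  | .bot => True
  | .neg C => C.inL Φ
  | .conj C D => C.inL Φ ∧ D.inL Φ
  | .disj C D => C.inL Φ ∧ D.inL Φ
  | .all R C => R.inL Φ ∧ C.inL Φ
  | .ex R C => R.inL Φ ∧ C.inL Φ
  | .nom _ => Φ.hasO = true
  | .atLeast _ _ b C => Φ.hasQ = true ∧ (b = true → Φ.hasI = true) ∧ C.inL Φ
  | .atMost _ _ b C => Φ.hasQ = true ∧ (b = true → Φ.hasI = true) ∧ C.inL Φ
  | .exSelf _ => Φ.hasSelf = true
/-- The role belongs to the language `L_Φ`. -/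
def DLRole.inL {CN RN IN : Type} (Φ : DLFeat) : DLRole CN RN IN → Prop
  | .name _ => True
  | .eps => True
  | .comp R S => R.inL Φ ∧ S.inL Φ
  | .runion R S => R.inL Φ ∧ S.inL Φ
  | .star R => R.inL Φ
  | .test C => C.inL Φ
  | .inv _ => Φ.hasI = true
  | .univ => Φ.hasU = true
end

mutual
/-- Semantics of concepts. -/
def DLConcept.sem {CN RN IN D : Type} (I : Interp CN RN IN D) : DLConcept CN RN IN → Set D
  | .atom A => I.cInt A
  | .top => Set.univ
  | .bot => ∅
  | .neg C => (DLConcept.sem I C)ᶜ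
  | .conj C C' => DLConcept.sem I C ∩ DLConcept.sem I C'
  | .disj C C' => DLConcept.sem I C ∪ DLConcept.sem I C'
  | .all R C => {x | ∀ y, DLRole.sem I R x y → y ∈ DLConcept.sem I C}
  | .ex R C => {x | ∃ y, DLRole.sem I R x y ∧ y ∈ DLConcept.sem I C}
  | .nom a => {I.iInt a}
  | .atLeast n r b C =>
      {x | (n : Cardinal) ≤ Cardinal.mk {y // brInt I (r, b) x y ∧ y ∈ DLConcept.sem I C}}
  | .atMost n r b C =>
      {x | Cardinal.mk {y // brInt I (r, b) x y ∧ y ∈ DLConcept.sem I C} ≤ (n : Cardinal)}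
  | .exSelf r => {x | I.rInt r x x}
/-- Semantics of roles. -/
def DLRole.sem {CN RN IN D : Type} (I : Interp CN RN IN D) : DLRole CN RN IN → D → D → Prop
  | .name r => I.rInt r
  | .eps => Eq
  | .comp R S => Relation.Comp (DLRole.sem I R) (DLRole.sem I S)
  | .runion R S => fun x y => DLRole.sem I R x y ∨ DLRole.sem I S x y
  | .star R => Relation.ReflTransGen (DLRole.sem I R)
  | .test C => fun x y => x = y ∧ x ∈ DLConcept.sem I C
  | .inv r => fun x y => I.rInt r y x
  | .univ => fun _ _ => True
end

/-- `Z` is an `L_Φ`-bisimulation between `I` and `I'`. -/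
def Bisim {CN RN IN D D' : Type} (Φ : DLFeat) (I : Interp CN RN IN D)
    (I' : Interp CN RN IN D') (Z : D → D' → Prop) : Prop :=
  (∀ a : IN, Z (I.iInt a) (I'.iInt a)) ∧
  (∀ (A : CN) x x', Z x x' → (x ∈ I.cInt A ↔ x' ∈ I'.cInt A)) ∧
  (∀ (r : RN) x x' y, Z x x' → I.rInt r x y → ∃ y', Z y y' ∧ I'.rInt r x' y') ∧
  (∀ (r : RN) x x' y', Z x x' → I'.rInt r x' y' → ∃ y, Z y y' ∧ I.rInt r x y) ∧
  (Φ.hasI = true →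
    (∀ (r : RN) x x' y, Z x x' → I.rInt r y x → ∃ y', Z y y' ∧ I'.rInt r y' x') ∧
    (∀ (r : RN) x x' y', Z x x' → I'.rInt r y' x' → ∃ y, Z y y' ∧ I.rInt r y x)) ∧
  (Φ.hasO = true → ∀ (a : IN) x x', Z x x' → (x = I.iInt a ↔ x' = I'.iInt a)) ∧
  (Φ.hasQ = true → ∀ (r : RN) x x', Z x x' →
    ∃ h : {y // I.rInt r x y} ≃ {y' // I'.rInt r x' y'}, ∀ y, Z y.1 (h y).1) ∧
  (Φ.hasQ = true → Φ.hasI = true → ∀ (r : RN) x x', Z x x' →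
    ∃ h : {y // I.rInt r y x} ≃ {y' // I'.rInt r y' x'}, ∀ y, Z y.1 (h y).1) ∧
  (Φ.hasU = true → (∀ x, ∃ x', Z x x') ∧ (∀ x', ∃ x, Z x x')) ∧
  (Φ.hasSelf = true → ∀ (r : RN) x x', Z x x' → (I.rInt r x x ↔ I'.rInt r x' x'))

/-- One step along a basic role (role name, or inverse of a role name if `I ∈ Φ`). -/
def basicStep {CN RN IN D : Type} (Φ : DLFeat) (I : Interp CN RN IN D) (x y : D) : Prop :=
  ∃ r : RN, I.rInt r x y ∨ (Φ.hasI = true ∧ I.rInt r y x)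

/-- `I` is unreachable-objects-free: every element is reachable from some named
individual via a finite path of basic-role edges. -/
def UOF {CN RN IN D : Type} (Φ : DLFeat) (I : Interp CN RN IN D) : Prop :=
  ∀ x : D, ∃ a : IN, Relation.ReflTransGen (basicStep Φ I) (I.iInt a) x

/-- `I` validates the GCI `C ⊑ C'`. -/
def satGCI {CN RN IN D : Type} (I : Interp CN RN IN D) (C C' : DLConcept CN RN IN) : Prop :=
  DLConcept.sem I C ⊆ DLConcept.sem I C'

/-- `I` is a model of the TBox `T`. -/
def modelsTBox {CN RN IN D : Type} (I : Interp CN RN IN D)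
    (T : Set (DLConcept CN RN IN × DLConcept CN RN IN)) : Prop :=
  ∀ p ∈ T, satGCI I p.1 p.2

/-- Individual assertions. -/
inductive Assertion (CN RN IN : Type) : Type where
  | conc (C : DLConcept CN RN IN) (a : IN)
  | rolePos (R : DLRole CN RN IN) (a b : IN)
  | roleNeg (R : DLRole CN RN IN) (a b : IN)
  | eq (a b : IN)
  | neq (a b : IN)

/-- The assertion belongs to `L_Φ`. -/
def Assertion.inL {CN RN IN : Type} (Φ : DLFeat) : Assertion CN RN IN → Prop
  | .conc C _ => C.inL Φ
  | .rolePos R _ _ => R.inL Φ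
  | .roleNeg R _ _ => R.inL Φ
  | .eq _ _ => True
  | .neq _ _ => True

/-- `I` satisfies the individual assertion. -/
def Assertion.sat {CN RN IN D : Type} (I : Interp CN RN IN D) : Assertion CN RN IN → Prop
  | .conc C a => I.iInt a ∈ DLConcept.sem I C
  | .rolePos R a b => DLRole.sem I R (I.iInt a) (I.iInt b)
  | .roleNeg R a b => ¬ DLRole.sem I R (I.iInt a) (I.iInt b)
  | .eq a b => I.iInt a = I.iInt b
  | .neq a b => I.iInt a ≠ I.iInt b

/-- `I` is a model of the ABox `A`. -/
def modelsABox {CN RN IN D : Type} (I : Interp CN RN IN D) (A : Set (Assertion CN RN IN)) : Prop :=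
  ∀ φ ∈ A, φ.sat I

/-- A role axiom `R₁ ∘ … ∘ R_k ⊑ r` (`ε ⊑ r` when the list is empty), the `R_i` basic roles. -/
structure RoleAx (RN : Type) where
  lhs : List (RN × Bool)
  rhs : RN

/-- The role axiom is in `L_Φ` (inverse basic roles only if `I ∈ Φ`). -/
def RoleAx.inL {RN : Type} (Φ : DLFeat) (ax : RoleAx RN) : Prop :=
  ∀ p ∈ ax.lhs, p.2 = true → Φ.hasI = true

/-- Interpretation of a composition chain of basic roles (`ε` for the empty chain). -/
def chainInt {CN RN IN D : Type} (I : Interp CN RN IN D) : List (RN × Bool) → D → D → Prop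
  | [] => Eq
  | R :: l => fun x z => ∃ y, brInt I R x y ∧ chainInt I l y z

/-- `I` validates the role axiom. -/
def satRoleAx {CN RN IN D : Type} (I : Interp CN RN IN D) (ax : RoleAx RN) : Prop :=
  ∀ x y, chainInt I ax.lhs x y → I.rInt ax.rhs x y

/-- `I` is a model of the RBox `R`. -/
def modelsRBox {CN RN IN D : Type} (I : Interp CN RN IN D) (R : Set (RoleAx RN)) : Prop :=
  ∀ ax ∈ R, satRoleAx I ax

/-- `I'` is an r-extension of `I`. -/
def RExt {CN RN IN D : Type} (I I' : Interp CN RN IN D) : Prop :=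
  I'.cInt = I.cInt ∧ I'.iInt = I.iInt ∧ ∀ (r : RN) x y, I.rInt r x y → I'.rInt r x y

/-- `I'` is the least r-extension of `I` validating the RBox `R`. -/
def LeastRExt {CN RN IN D : Type} (I : Interp CN RN IN D) (R : Set (RoleAx RN))
    (I' : Interp CN RN IN D) : Prop :=
  RExt I I' ∧ modelsRBox I' R ∧
    ∀ I'' : Interp CN RN IN D, RExt I I'' → modelsRBox I'' R →
      ∀ (r : RN) x y, I'.rInt r x y → I''.rInt r x y

/-- `I` is finitely branching w.r.t. `L_Φ`. -/
def FinBranch {CN RN IN D : Type} (Φ : DLFeat) (I : Interp CN RN IN D) : Prop :=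
  ∀ (r : RN) (x : D), {y | I.rInt r x y}.Finite ∧ (Φ.hasI = true → {y | I.rInt r y x}.Finite)

/-- `x` and `x'` are `L_Φ`-equivalent: they satisfy the same concepts of `L_Φ`. -/
def LEquiv {CN RN IN D D' : Type} (Φ : DLFeat) (I : Interp CN RN IN D)
    (I' : Interp CN RN IN D') (x : D) (x' : D') : Prop :=
  ∀ C : DLConcept CN RN IN, C.inL Φ → (x ∈ DLConcept.sem I C ↔ x' ∈ DLConcept.sem I' C)

/-- The largest `L_Φ`-auto-bisimulation of `I` (union of all auto-bisimulations). -/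
def gbisim {CN RN IN D : Type} (Φ : DLFeat) (I : Interp CN RN IN D) (x y : D) : Prop :=
  ∃ Z, Bisim Φ I I Z ∧ Z x y

/-- The quotient interpretation of `I` w.r.t. the largest `L_Φ`-auto-bisimulation. -/
def quotInterp {CN RN IN D : Type} (Φ : DLFeat) (I : Interp CN RN IN D) :
    Interp CN RN IN (Quot (gbisim Φ I)) where
  cInt A := {q | ∃ x, Quot.mk _ x = q ∧ x ∈ I.cInt A}
  rInt r q q' := ∃ x y, Quot.mk _ x = q ∧ Quot.mk _ y = q' ∧ I.rInt r x y
  iInt a := Quot.mk _ (I.iInt a)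

/-- A QS-interpretation: an interpretation together with multiplicity functions for
basic roles and self-loop sets for role names. -/
structure QSInterp (CN RN IN D : Type) where
  toInterp : Interp CN RN IN D
  QU : (RN × Bool) → D → D → ℕ
  SE : RN → Set D

/-- The defining positivity condition of QS-interpretations:
`QU R x y > 0` iff `R` connects `x` to `y`. -/
def QSInterp.Proper {CN RN IN D : Type} (J : QSInterp CN RN IN D) : Prop :=
  ∀ (R : RN × Bool) x y, 0 < J.QU R x y ↔ brInt J.toInterp R x y

/-- `Σ {f y : y ∈ S}` as an extended natural number. -/
noncomputable def qsum {D : Type} (f : D → ℕ) (S : Set D) : ℕ∞ :=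
  ⨆ (s : Finset D) (_ : ↑s ⊆ S), (∑ y ∈ s, f y : ℕ∞)

mutual
/-- Semantics of concepts in a QS-interpretation. -/
noncomputable def DLConcept.qsem {CN RN IN D : Type} (J : QSInterp CN RN IN D) :
    DLConcept CN RN IN → Set D
  | .atom A => J.toInterp.cInt A
  | .top => Set.univ
  | .bot => ∅
  | .neg C => (DLConcept.qsem J C)ᶜ
  | .conj C C' => DLConcept.qsem J C ∩ DLConcept.qsem J C'
  | .disj C C' => DLConcept.qsem J C ∪ DLConcept.qsem J C'
  | .all R C => {x | ∀ y, DLRole.qsem J R x y → y ∈ DLConcept.qsem J C}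
  | .ex R C => {x | ∃ y, DLRole.qsem J R x y ∧ y ∈ DLConcept.qsem J C}
  | .nom a => {J.toInterp.iInt a}
  | .atLeast n r b C => {x | (n : ℕ∞) ≤ qsum (J.QU (r, b) x) (DLConcept.qsem J C)}
  | .atMost n r b C => {x | qsum (J.QU (r, b) x) (DLConcept.qsem J C) ≤ (n : ℕ∞)}
  | .exSelf r => J.SE r
/-- Semantics of roles in a QS-interpretation. -/
noncomputable def DLRole.qsem {CN RN IN D : Type} (J : QSInterp CN RN IN D) :
    DLRole CN RN IN → D → D → Prop
  | .name r => J.toInterp.rInt r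
  | .eps => Eq
  | .comp R S => Relation.Comp (DLRole.qsem J R) (DLRole.qsem J S)
  | .runion R S => fun x y => DLRole.qsem J R x y ∨ DLRole.qsem J S x y
  | .star R => Relation.ReflTransGen (DLRole.qsem J R)
  | .test C => fun x y => x = y ∧ x ∈ DLConcept.qsem J C
  | .inv r => fun x y => J.toInterp.rInt r y x
  | .univ => fun _ _ => True
end

/-- The quotient QS-interpretation of a traditional interpretation `I` w.r.t. the
largest `L_Φ`-auto-bisimulation. -/
noncomputable def qsQuot {CN RN IN D : Type} (Φ : DLFeat) (I : Interp CN RN IN D) :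
    QSInterp CN RN IN (Quot (gbisim Φ I)) where
  toInterp := quotInterp Φ I
  QU R q q' := sSup {n | ∃ x, Quot.mk _ x = q ∧
    n = Set.ncard {y | Quot.mk (gbisim Φ I) y = q' ∧ brInt I R x y}}
  SE r := {q | ∃ x, Quot.mk _ x = q ∧ I.rInt r x x}

section BisimAux

variable {CN RN IN D D' : Type} {Φ : DLFeat} {I : Interp CN RN IN D}
  {I' : Interp CN RN IN D'} {Z : D → D' → Prop}

theorem cardAux {P : D → Prop} {P' : D' → Prop} {Q : D → Prop} {Q' : D' → Prop}
    (e : {y // P y} ≃ {y' // P' y'}) (h : ∀ z : {y // P y}, Q z.1 ↔ Q' (e z).1) :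
    Cardinal.mk {y // P y ∧ Q y} = Cardinal.mk {y' // P' y' ∧ Q' y'} :=
  Cardinal.mk_congr ((Equiv.subtypeSubtypeEquivSubtypeInter P Q).symm.trans
    ((e.subtypeEquiv h).trans (Equiv.subtypeSubtypeEquivSubtypeInter P' Q')))

mutual

theorem conceptInv (hZ : Bisim Φ I I' Z) (C : DLConcept CN RN IN) (hC : C.inL Φ) :
    ∀ x x', Z x x' → (x ∈ DLConcept.sem I C ↔ x' ∈ DLConcept.sem I' C) := by
  obtain ⟨hInd, hAtom, hZig, hZag, hInv, hNom, hQ, hQI, hU, hSelf⟩ := hZ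
  intro x x' hxx'
  cases C with
  | atom A => exact hAtom A x x' hxx'
  | top => simp [DLConcept.sem]
  | bot => simp [DLConcept.sem]
  | neg C =>
      have := conceptInv ⟨hInd, hAtom, hZig, hZag, hInv, hNom, hQ, hQI, hU, hSelf⟩ C hC x x' hxx'
      simp only [DLConcept.sem, Set.mem_compl_iff]
      exact not_congr this
  | conj C C' =>
      have h1 := conceptInv ⟨hInd, hAtom, hZig, hZag, hInv, hNom, hQ, hQI, hU, hSelf⟩ C hC.1 x x' hxx'
      have h2 := conceptInv ⟨hInd, hAtom, hZig, hZag, hInv, hNom, hQ, hQI, hU, hSelf⟩ C' hC.2 x x' hxx'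
      simp only [DLConcept.sem, Set.mem_inter_iff]
      exact and_congr h1 h2
  | disj C C' =>
      have h1 := conceptInv ⟨hInd, hAtom, hZig, hZag, hInv, hNom, hQ, hQI, hU, hSelf⟩ C hC.1 x x' hxx'
      have h2 := conceptInv ⟨hInd, hAtom, hZig, hZag, hInv, hNom, hQ, hQI, hU, hSelf⟩ C' hC.2 x x' hxx'
      simp only [DLConcept.sem, Set.mem_union]
      exact or_congr h1 h2
  | all R C =>
      simp only [DLConcept.sem, Set.mem_setOf_eq]
      constructor
      · intro h y' hR'
        obtain ⟨y, hZy, hRy⟩ := roleZag ⟨hInd, hAtom, hZig, hZag, hInv, hNom, hQ, hQI, hU, hSelf⟩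
          R hC.1 x x' y' hxx' hR'
        exact (conceptInv ⟨hInd, hAtom, hZig, hZag, hInv, hNom, hQ, hQI, hU, hSelf⟩
          C hC.2 y y' hZy).mp (h y hRy)
      · intro h y hR
        obtain ⟨y', hZy, hRy⟩ := roleZig ⟨hInd, hAtom, hZig, hZag, hInv, hNom, hQ, hQI, hU, hSelf⟩
          R hC.1 x x' y hxx' hR
        exact (conceptInv ⟨hInd, hAtom, hZig, hZag, hInv, hNom, hQ, hQI, hU, hSelf⟩
          C hC.2 y y' hZy).mpr (h y' hRy)
  | ex R C =>
      simp only [DLConcept.sem, Set.mem_setOf_eq]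
      constructor
      · rintro ⟨y, hR, hy⟩
        obtain ⟨y', hZy, hRy⟩ := roleZig ⟨hInd, hAtom, hZig, hZag, hInv, hNom, hQ, hQI, hU, hSelf⟩
          R hC.1 x x' y hxx' hR
        exact ⟨y', hRy, (conceptInv ⟨hInd, hAtom, hZig, hZag, hInv, hNom, hQ, hQI, hU, hSelf⟩
          C hC.2 y y' hZy).mp hy⟩
      · rintro ⟨y', hR, hy⟩
        obtain ⟨y, hZy, hRy⟩ := roleZag ⟨hInd, hAtom, hZig, hZag, hInv, hNom, hQ, hQI, hU, hSelf⟩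
          R hC.1 x x' y' hxx' hR
        exact ⟨y, hRy, (conceptInv ⟨hInd, hAtom, hZig, hZag, hInv, hNom, hQ, hQI, hU, hSelf⟩
          C hC.2 y y' hZy).mpr hy⟩
  | nom a =>
      simp only [DLConcept.sem, Set.mem_singleton_iff]
      exact hNom hC a x x' hxx'
  | atLeast n r b C =>
      obtain ⟨hq, hbi, hCin⟩ := hC
      have hcard : Cardinal.mk {y // brInt I (r, b) x y ∧ y ∈ DLConcept.sem I C}
          = Cardinal.mk {y' // brInt I' (r, b) x' y' ∧ y' ∈ DLConcept.sem I' C} := by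
        cases b with
        | false =>
            obtain ⟨e, he⟩ := hQ hq r x x' hxx'
            simp only [brInt]
            exact cardAux e (fun z => conceptInv
              ⟨hInd, hAtom, hZig, hZag, hInv, hNom, hQ, hQI, hU, hSelf⟩ C hCin z.1 (e z).1 (he z))
        | true =>
            obtain ⟨e, he⟩ := hQI hq (hbi rfl) r x x' hxx'
            simp only [brInt]
            exact cardAux e (fun z => conceptInv
              ⟨hInd, hAtom, hZig, hZag, hInv, hNom, hQ, hQI, hU, hSelf⟩ C hCin z.1 (e z).1 (he z))
      simp only [DLConcept.sem, Set.mem_setOf_eq, hcard]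
  | atMost n r b C =>
      obtain ⟨hq, hbi, hCin⟩ := hC
      have hcard : Cardinal.mk {y // brInt I (r, b) x y ∧ y ∈ DLConcept.sem I C}
          = Cardinal.mk {y' // brInt I' (r, b) x' y' ∧ y' ∈ DLConcept.sem I' C} := by
        cases b with
        | false =>
            obtain ⟨e, he⟩ := hQ hq r x x' hxx'
            simp only [brInt]
            exact cardAux e (fun z => conceptInv
              ⟨hInd, hAtom, hZig, hZag, hInv, hNom, hQ, hQI, hU, hSelf⟩ C hCin z.1 (e z).1 (he z))
        | true =>
            obtain ⟨e, he⟩ := hQI hq (hbi rfl) r x x' hxx'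
            simp only [brInt]
            exact cardAux e (fun z => conceptInv
              ⟨hInd, hAtom, hZig, hZag, hInv, hNom, hQ, hQI, hU, hSelf⟩ C hCin z.1 (e z).1 (he z))
      simp only [DLConcept.sem, Set.mem_setOf_eq, hcard]
  | exSelf r =>
      simp only [DLConcept.sem, Set.mem_setOf_eq]
      exact hSelf hC r x x' hxx'

theorem roleZig (hZ : Bisim Φ I I' Z) (R : DLRole CN RN IN) (hR : R.inL Φ) :
    ∀ x x' y, Z x x' → DLRole.sem I R x y → ∃ y', Z y y' ∧ DLRole.sem I' R x' y' := by
  obtain ⟨hInd, hAtom, hZig, hZag, hInv, hNom, hQ, hQI, hU, hSelf⟩ := hZ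
  intro x x' y hxx' h
  cases R with
  | name r => exact hZig r x x' y hxx' h
  | eps => exact ⟨x', h ▸ hxx', rfl⟩
  | comp R S =>
      obtain ⟨b, hab, hby⟩ := h
      obtain ⟨b', hZb, hab'⟩ := roleZig ⟨hInd, hAtom, hZig, hZag, hInv, hNom, hQ, hQI, hU, hSelf⟩
        R hR.1 x x' b hxx' hab
      obtain ⟨y', hZy, hby'⟩ := roleZig ⟨hInd, hAtom, hZig, hZag, hInv, hNom, hQ, hQI, hU, hSelf⟩
        S hR.2 b b' y hZb hby
      exact ⟨y', hZy, b', hab', hby'⟩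
  | runion R S =>
      cases h with
      | inl h =>
          obtain ⟨y', hZy, h'⟩ := roleZig ⟨hInd, hAtom, hZig, hZag, hInv, hNom, hQ, hQI, hU, hSelf⟩
            R hR.1 x x' y hxx' h
          exact ⟨y', hZy, Or.inl h'⟩
      | inr h =>
          obtain ⟨y', hZy, h'⟩ := roleZig ⟨hInd, hAtom, hZig, hZag, hInv, hNom, hQ, hQI, hU, hSelf⟩
            S hR.2 x x' y hxx' h
          exact ⟨y', hZy, Or.inr h'⟩
  | star R =>
      revert x'
      induction h with
      | refl => exact fun x' hxx' => ⟨x', hxx', Relation.ReflTransGen.refl⟩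
      | @tail b c hab hbc ih =>
          intro x' hxx'
          obtain ⟨b', hZb, hst⟩ := ih x' hxx'
          obtain ⟨y', hZy, hstep⟩ := roleZig ⟨hInd, hAtom, hZig, hZag, hInv, hNom, hQ, hQI, hU, hSelf⟩
            R hR b b' c hZb hbc
          exact ⟨y', hZy, hst.tail hstep⟩
  | test C =>
      obtain ⟨rfl, hmem⟩ := h
      exact ⟨x', hxx', rfl, (conceptInv ⟨hInd, hAtom, hZig, hZag, hInv, hNom, hQ, hQI, hU, hSelf⟩
        C hR x x' hxx').mp hmem⟩
  | inv r =>
      obtain ⟨y', hZy, h'⟩ := (hInv hR).1 r x x' y hxx' h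
      exact ⟨y', hZy, h'⟩
  | univ =>
      obtain ⟨y', hZy⟩ := (hU hR).1 y
      exact ⟨y', hZy, trivial⟩

theorem roleZag (hZ : Bisim Φ I I' Z) (R : DLRole CN RN IN) (hR : R.inL Φ) :
    ∀ x x' y', Z x x' → DLRole.sem I' R x' y' → ∃ y, Z y y' ∧ DLRole.sem I R x y := by
  obtain ⟨hInd, hAtom, hZig, hZag, hInv, hNom, hQ, hQI, hU, hSelf⟩ := hZ
  intro x x' y' hxx' h
  cases R with
  | name r => exact hZag r x x' y' hxx' h
  | eps => exact ⟨x, h ▸ hxx', rfl⟩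
  | comp R S =>
      obtain ⟨b', hab, hby⟩ := h
      obtain ⟨b, hZb, hab'⟩ := roleZag ⟨hInd, hAtom, hZig, hZag, hInv, hNom, hQ, hQI, hU, hSelf⟩
        R hR.1 x x' b' hxx' hab
      obtain ⟨y, hZy, hby'⟩ := roleZag ⟨hInd, hAtom, hZig, hZag, hInv, hNom, hQ, hQI, hU, hSelf⟩
        S hR.2 b b' y' hZb hby
      exact ⟨y, hZy, b, hab', hby'⟩
  | runion R S =>
      cases h with
      | inl h =>
          obtain ⟨y, hZy, h'⟩ := roleZag ⟨hInd, hAtom, hZig, hZag, hInv, hNom, hQ, hQI, hU, hSelf⟩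
            R hR.1 x x' y' hxx' h
          exact ⟨y, hZy, Or.inl h'⟩
      | inr h =>
          obtain ⟨y, hZy, h'⟩ := roleZag ⟨hInd, hAtom, hZig, hZag, hInv, hNom, hQ, hQI, hU, hSelf⟩
            S hR.2 x x' y' hxx' h
          exact ⟨y, hZy, Or.inr h'⟩
  | star R =>
      revert x
      induction h with
      | refl => exact fun x hxx' => ⟨x, hxx', Relation.ReflTransGen.refl⟩
      | @tail b' c' hab hbc ih =>
          intro x hxx'
          obtain ⟨b, hZb, hst⟩ := ih x hxx'
          obtain ⟨y, hZy, hstep⟩ := roleZag ⟨hInd, hAtom, hZig, hZag, hInv, hNom, hQ, hQI, hU, hSelf⟩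
            R hR b b' c' hZb hbc
          exact ⟨y, hZy, hst.tail hstep⟩
  | test C =>
      obtain ⟨rfl, hmem⟩ := h
      exact ⟨x, hxx', rfl, (conceptInv ⟨hInd, hAtom, hZig, hZag, hInv, hNom, hQ, hQI, hU, hSelf⟩
        C hR x x' hxx').mpr hmem⟩
  | inv r =>
      obtain ⟨y, hZy, h'⟩ := (hInv hR).2 r x x' y' hxx' h
      exact ⟨y, hZy, h'⟩
  | univ =>
      obtain ⟨y, hZy⟩ := (hU hR).2 y'
      exact ⟨y, hZy, trivial⟩

end

theorem pathPropFwd (hZ : Bisim Φ I I' Z) {x y : D}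
    (h : Relation.ReflTransGen (basicStep Φ I) x y) :
    ∀ x', Z x x' → ∃ y', Z y y' := by
  induction h with
  | refl => exact fun x' hx => ⟨x', hx⟩
  | @tail b c hab hbc ih =>
      intro x' hx
      obtain ⟨b', hZb⟩ := ih x' hx
      obtain ⟨r, hr⟩ := hbc
      cases hr with
      | inl hr => obtain ⟨c', hc, _⟩ := hZ.2.2.1 r b b' c hZb hr; exact ⟨c', hc⟩
      | inr hr => obtain ⟨c', hc, _⟩ := (hZ.2.2.2.2.1 hr.1).1 r b b' c hZb hr.2; exact ⟨c', hc⟩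

theorem pathPropBwd (hZ : Bisim Φ I I' Z) {x' y' : D'}
    (h : Relation.ReflTransGen (basicStep Φ I') x' y') :
    ∀ x, Z x x' → ∃ y, Z y y' := by
  induction h with
  | refl => exact fun x hx => ⟨x, hx⟩
  | @tail b' c' hab hbc ih =>
      intro x hx
      obtain ⟨b, hZb⟩ := ih x hx
      obtain ⟨r, hr⟩ := hbc
      cases hr with
      | inl hr => obtain ⟨c, hc, _⟩ := hZ.2.2.2.1 r b b' c' hZb hr; exact ⟨c, hc⟩
      | inr hr => obtain ⟨c, hc, _⟩ := (hZ.2.2.2.2.1 hr.1).2 r b b' c' hZb hr.2; exact ⟨c, hc⟩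

end BisimAux

/-- TBoxes in `L_Φ` are invariant under `L_Φ`-bisimulation between
unreachable-objects-free interpretations. -/
theorem tbox_invariance_uof {CN RN IN D D' : Type} (Φ : DLFeat)
    (I : Interp CN RN IN D) (I' : Interp CN RN IN D')
    (hI : UOF Φ I) (hI' : UOF Φ I')
    (T : Set (DLConcept CN RN IN × DLConcept CN RN IN)) (hfin : T.Finite)
    (hT : ∀ p ∈ T, p.1.inL Φ ∧ p.2.inL Φ)
    (hbisim : ∃ Z, Bisim Φ I I' Z) :
    modelsTBox I T ↔ modelsTBox I' T := by
  obtain ⟨Z, hZ⟩ := hbisim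
  have hfwd : ∀ x, ∃ x', Z x x' := fun x => by
    obtain ⟨a, hp⟩ := hI x
    exact pathPropFwd hZ hp _ (hZ.1 a)
  have hbwd : ∀ x', ∃ x, Z x x' := fun x' => by
    obtain ⟨a, hp⟩ := hI' x'
    exact pathPropBwd hZ hp _ (hZ.1 a)
  constructor
  · intro h p hp x' hx'
    obtain ⟨x, hZx⟩ := hbwd x'
    have h1 := (conceptInv hZ p.1 (hT p hp).1 x x' hZx).mpr hx'
    exact (conceptInv hZ p.2 (hT p hp).2 x x' hZx).mp (h p hp h1)
  · intro h p hp x hx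
    obtain ⟨x', hZx⟩ := hfwd x
    have h1 := (conceptInv hZ p.1 (hT p hp).1 x x' hZx).mp hx
    exact (conceptInv hZ p.2 (hT p hp).2 x x' hZx).mpr (h p hp h1)
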